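/- For every c ∈ ℝ there exist ε > 0 and a function u that is real-analytic on (−ε, ε), with u(0) = c and u'(0) = 0, which satisfies the generalized Lane–Emden equation for all x ∈ (0, ε); moreover its Taylor coefficients a_k = u^{(k)}(0)/k! satisfy a_0 = c, a_1 = 0 and, for all k ≥ 0, (k+2)(k+1+α)·a_{k+2} = −δ·c_k, where c_k denotes the k-th Taylor coefficient of the function u^p at 0. -/

import Mathlib

set_option autoImplicit false
set_option maxHeartbeats 2000000

open Real Set

namespace LaneEmdenAux

open Finset PowerSeries FormalMultilinearSeries
open scoped ENNReal NNReal

noncomputable def coeffP (p : ℕ) (b : ℕ → ℝ) (k : ℕ) : ℝ :=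
  ∑ l ∈ Finset.finsuppAntidiag (Finset.range p) k, ∏ i ∈ Finset.range p, b (l i)

lemma coeffP_eq (p : ℕ) (b : ℕ → ℝ) (k : ℕ) :
    coeffP p b k = PowerSeries.coeff k ((PowerSeries.mk b) ^ p) := by
  rw [PowerSeries.coeff_pow]; simp [coeffP, PowerSeries.coeff_mk]

lemma coeffP_congr (p : ℕ) {b b' : ℕ → ℝ} (k : ℕ) (h : ∀ n ≤ k, b n = b' n) :
    coeffP p b k = coeffP p b' k := by
  unfold coeffP
  refine Finset.sum_congr rfl fun l hl => Finset.prod_congr rfl fun i hi => h _ ?_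
  rw [Finset.mem_finsuppAntidiag] at hl
  calc l i ≤ ∑ j ∈ Finset.range p, l j :=
        Finset.single_le_sum (fun j _ => Nat.zero_le _) hi
    _ = k := hl.1

noncomputable def seq (p : ℕ) (α δ c : ℝ) : ℕ → (ℕ → ℝ)
  | 0 => fun n => if n = 0 then c else 0
  | (k+1) => Function.update (seq p α δ c k) (k+2)
      (-δ * coeffP p (seq p α δ c k) k / (((k:ℝ)+2) * ((k:ℝ)+1+α)))

noncomputable def a (p : ℕ) (α δ c : ℝ) (n : ℕ) : ℝ := seq p α δ c n n

variable (p : ℕ) (α δ c : ℝ)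

lemma seq_succ_eq (k n : ℕ) (h : n ≤ k + 1) : seq p α δ c (k+1) n = seq p α δ c k n := by
  rw [seq]
  exact Function.update_of_ne (by omega) _ _

lemma seq_eq_a : ∀ k n, n ≤ k + 1 → seq p α δ c k n = a p α δ c n := by
  intro k
  induction k with
  | zero =>
    intro n hn
    interval_cases n
    · rfl
    · exact (seq_succ_eq p α δ c 0 1 (by norm_num)).symm
  | succ k ih =>
    intro n hn
    rcases Nat.lt_or_ge n (k+2) with h | h
    · rw [seq_succ_eq p α δ c k n (by omega), ih n (by omega)]
    · have hn2 : n = k + 2 := by omega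
      subst hn2
      exact (seq_succ_eq p α δ c (k+1) (k+2) (by omega)).symm

lemma a_zero : a p α δ c 0 = c := rfl

lemma a_one : a p α δ c 1 = 0 := by
  have : a p α δ c 1 = seq p α δ c 0 1 := (seq_succ_eq p α δ c 0 1 (by norm_num)).symm
  rw [this, seq]
  simp

lemma a_rec (k : ℕ) :
    a p α δ c (k+2) = -δ * coeffP p (a p α δ c) k / (((k:ℝ)+2) * ((k:ℝ)+1+α)) := by
  have h1 : a p α δ c (k+2) = seq p α δ c (k+1) (k+2) :=
    seq_succ_eq p α δ c (k+1) (k+2) (by omega)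
  rw [h1, seq, Function.update_self]
  congr 1
  congr 1
  exact coeffP_congr p k fun n hn => seq_eq_a p α δ c k n (by omega)

noncomputable def bb (n : ℕ) : ℝ := (((n:ℝ)+1)^2)⁻¹

lemma bb_pos (n : ℕ) : 0 < bb n := by unfold bb; positivity

lemma bb_le_one (n : ℕ) : bb n ≤ 1 := by
  unfold bb
  rw [inv_le_one_iff₀]
  right
  nlinarith [Nat.cast_nonneg (α := ℝ) n]

lemma sum_bb_le (k : ℕ) : ∑ i ∈ Finset.range k, bb i ≤ 2 := by
  have key : ∀ k : ℕ, ∑ i ∈ Finset.range k, bb i ≤ 2 - 2/((k:ℝ)+1) := by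
    intro k
    induction k with
    | zero => simp
    | succ k ih =>
      rw [Finset.sum_range_succ]
      have hk : (0:ℝ) < (k:ℝ) + 1 := by positivity
      have hk2 : (0:ℝ) < (k:ℝ) + 2 := by positivity
      have hb : bb k ≤ 2/((k:ℝ)+1) - 2/((k:ℝ)+2) := by
        unfold bb
        rw [div_sub_div _ _ (ne_of_gt hk) (ne_of_gt hk2)]
        rw [inv_le_iff_one_le_mul₀ (by positivity)]
        rw [div_mul_eq_mul_div, le_div_iff₀ (by positivity)]
        nlinarith [Nat.cast_nonneg (α := ℝ) k]
      push_cast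
      rw [show ((k:ℝ)+1+1) = (k:ℝ)+2 by ring]
      linarith
  have h2 : (0:ℝ) < 2/((k:ℝ)+1) := by positivity
  linarith [key k]

lemma conv_bb_term (x y : ℝ) (hx : 0 < x) (hy : 0 < y) :
    (x^2)⁻¹ * (y^2)⁻¹ ≤ 2*(((x+y)^2)⁻¹)*((x^2)⁻¹+(y^2)⁻¹) := by
  have h1 : (0:ℝ) < x^2*y^2*(x+y)^2 := by positivity
  rw [← sub_nonneg]
  have expand : 2*(((x+y)^2)⁻¹)*((x^2)⁻¹+(y^2)⁻¹) - (x^2)⁻¹ * (y^2)⁻¹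
      = (2*(x^2+y^2) - (x+y)^2) / (x^2*y^2*(x+y)^2) := by
    field_simp
    ring
  rw [expand]
  apply div_nonneg _ (le_of_lt h1)
  nlinarith [sq_nonneg (x-y)]

lemma sum_antidiag_bb_fst (k : ℕ) :
    ∑ ij ∈ Finset.HasAntidiagonal.antidiagonal k, bb ij.1 ≤ 2 := by
  rw [Finset.Nat.sum_antidiagonal_eq_sum_range_succ_mk]
  exact sum_bb_le (k+1)

lemma sum_antidiag_bb_snd (k : ℕ) :
    ∑ ij ∈ Finset.HasAntidiagonal.antidiagonal k, bb ij.2 ≤ 2 := by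
  rw [← Finset.HasAntidiagonal.map_swap_antidiagonal, Finset.sum_map]
  simpa using sum_antidiag_bb_fst k

lemma conv_bb_le (k : ℕ) : ∑ ij ∈ Finset.HasAntidiagonal.antidiagonal k, bb ij.1 * bb ij.2 ≤ 16 * bb k := by
  have step1 : ∑ ij ∈ Finset.HasAntidiagonal.antidiagonal k, bb ij.1 * bb ij.2
      ≤ ∑ ij ∈ Finset.HasAntidiagonal.antidiagonal k, 2 * (((k:ℝ)+2)^2)⁻¹ * (bb ij.1 + bb ij.2) := by
    refine Finset.sum_le_sum ?_
    rintro ⟨i, j⟩ hij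
    rw [Finset.HasAntidiagonal.mem_antidiagonal] at hij
    have hk : ((i:ℝ)+1) + ((j:ℝ)+1) = (k:ℝ) + 2 := by
      push_cast [← hij]; ring
    have := conv_bb_term ((i:ℝ)+1) ((j:ℝ)+1) (by positivity) (by positivity)
    rw [hk] at this
    simpa [bb] using this
  have step2 : ∑ ij ∈ Finset.HasAntidiagonal.antidiagonal k, 2 * (((k:ℝ)+2)^2)⁻¹ * (bb ij.1 + bb ij.2)
      ≤ 2 * (((k:ℝ)+2)^2)⁻¹ * 4 := by
    rw [← Finset.mul_sum, Finset.sum_add_distrib]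
    have h1 := sum_antidiag_bb_fst k
    have h2 := sum_antidiag_bb_snd k
    have hpos : (0:ℝ) ≤ 2 * (((k:ℝ)+2)^2)⁻¹ := by positivity
    nlinarith
  have step3 : 2 * (((k:ℝ)+2)^2)⁻¹ * 4 ≤ 16 * bb k := by
    unfold bb
    have h1 : (0:ℝ) < ((k:ℝ)+1)^2 := by positivity
    have h2 : (0:ℝ) < ((k:ℝ)+2)^2 := by positivity
    rw [mul_comm, ← mul_assoc]
    have : (((k:ℝ)+2)^2)⁻¹ ≤ (((k:ℝ)+1)^2)⁻¹ := by
      apply inv_anti₀ h1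
      nlinarith [Nat.cast_nonneg (α := ℝ) k]
    nlinarith [inv_nonneg.mpr (le_of_lt h2)]
  linarith

lemma bb_def (n : ℕ) : bb n = (((n:ℝ)+1)^2)⁻¹ := rfl


lemma coeff_pow_nonneg (g : ℕ → ℝ) (hg : ∀ n, 0 ≤ g n) (q k : ℕ) :
    0 ≤ PowerSeries.coeff k ((PowerSeries.mk g) ^ q) := by
  induction q generalizing k with
  | zero =>
    simp only [pow_zero, PowerSeries.coeff_one]
    split <;> norm_num
  | succ q ih =>
    rw [pow_succ', PowerSeries.coeff_mul]
    refine Finset.sum_nonneg fun ij _ => ?_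
    exact mul_nonneg (by simpa using hg ij.1) (ih ij.2)

lemma coeff_pow_dominate (f g : ℕ → ℝ) (q : ℕ) :
    ∀ k, (∀ n ≤ k, |f n| ≤ g n) →
    |PowerSeries.coeff k ((PowerSeries.mk f) ^ q)| ≤ PowerSeries.coeff k ((PowerSeries.mk g) ^ q) := by
  induction q with
  | zero =>
    intro k _
    simp only [pow_zero, PowerSeries.coeff_one]
    split <;> norm_num
  | succ q ih =>
    intro k hk
    rw [pow_succ', pow_succ', PowerSeries.coeff_mul, PowerSeries.coeff_mul]
    refine (Finset.abs_sum_le_sum_abs _ _).trans (Finset.sum_le_sum ?_)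
    rintro ⟨i, j⟩ hij
    rw [Finset.HasAntidiagonal.mem_antidiagonal] at hij
    simp only [PowerSeries.coeff_mk, abs_mul]
    have hij1 : i ≤ k := by omega
    have hij2 : j ≤ k := by omega
    have h1 : |f i| ≤ g i := hk i hij1
    have h2 : |PowerSeries.coeff j ((PowerSeries.mk f) ^ q)| ≤
        PowerSeries.coeff j ((PowerSeries.mk g) ^ q) :=
      ih j fun n hn => hk n (le_trans hn hij2)
    exact mul_le_mul h1 h2 (abs_nonneg _) ((abs_nonneg _).trans h1)

lemma coeff_bb_pow_le (q : ℕ) : ∀ k, PowerSeries.coeff k ((PowerSeries.mk bb) ^ (q+1)) ≤ 16^q * bb k := by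
  induction q with
  | zero =>
    intro k
    simp [PowerSeries.coeff_mk]
  | succ q ih =>
    intro k
    rw [pow_succ', PowerSeries.coeff_mul]
    calc ∑ ij ∈ Finset.HasAntidiagonal.antidiagonal k,
          PowerSeries.coeff ij.1 (PowerSeries.mk bb) * PowerSeries.coeff ij.2 ((PowerSeries.mk bb)^(q+1))
        ≤ ∑ ij ∈ Finset.HasAntidiagonal.antidiagonal k, bb ij.1 * (16^q * bb ij.2) := by
          refine Finset.sum_le_sum ?_
          rintro ⟨i, j⟩ _
          simp only [PowerSeries.coeff_mk]
          exact mul_le_mul_of_nonneg_left (ih j) (le_of_lt (bb_pos i))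
      _ = 16^q * ∑ ij ∈ Finset.HasAntidiagonal.antidiagonal k, bb ij.1 * bb ij.2 := by
          rw [Finset.mul_sum]; congr 1; ext ij; ring
      _ ≤ 16^q * (16 * bb k) := by
          exact mul_le_mul_of_nonneg_left (conv_bb_le k) (by positivity)
      _ = 16^(q+1) * bb k := by ring

lemma coeff_scaled (M r : ℝ) (q k : ℕ) :
    PowerSeries.coeff k ((PowerSeries.mk (fun n => M * r^n * bb n)) ^ q)
      = M^q * r^k * PowerSeries.coeff k ((PowerSeries.mk bb) ^ q) := by
  have hmk : PowerSeries.mk (fun n => M * r^n * bb n)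
      = PowerSeries.C M * PowerSeries.rescale r (PowerSeries.mk bb) := by
    ext n
    simp [PowerSeries.coeff_mk, PowerSeries.coeff_C_mul, PowerSeries.coeff_rescale]
    ring
  rw [hmk, mul_pow, ← map_pow, ← map_pow, PowerSeries.coeff_C_mul,
    PowerSeries.coeff_rescale]
  ring

noncomputable def MM (c : ℝ) : ℝ := |c| + 1

noncomputable def rr (p : ℕ) (δ c : ℝ) : ℝ :=
  max 1 (Real.sqrt (9 * |δ| * 16^(p-1) * (MM c)^(p-1)))

variable (p : ℕ) (α δ c : ℝ)

lemma MM_pos : 0 < MM c := by unfold MM; positivity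

lemma rr_one_le : 1 ≤ rr p δ c := le_max_left _ _

lemma rr_pos : 0 < rr p δ c := lt_of_lt_of_le one_pos (rr_one_le p δ c)

lemma rr_sq : 9 * |δ| * 16^(p-1) * (MM c)^(p-1) ≤ (rr p δ c)^2 := by
  have hX : (0:ℝ) ≤ 9 * |δ| * 16^(p-1) * (MM c)^(p-1) := by
    have := MM_pos c
    positivity
  calc 9 * |δ| * 16^(p-1) * (MM c)^(p-1)
      = (Real.sqrt (9 * |δ| * 16^(p-1) * (MM c)^(p-1)))^2 := (Real.sq_sqrt hX).symm
    _ ≤ (rr p δ c)^2 := by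
        apply pow_le_pow_left₀ (Real.sqrt_nonneg _) (le_max_right _ _)

lemma a_bound (hp : 1 < p) (hα : 0 < α) :
    ∀ n, |a p α δ c n| ≤ MM c * (rr p δ c)^n * bb n := by
  set M := MM c with hM
  set r := rr p δ c with hr
  have hM1 : 1 ≤ M := by rw [hM]; unfold MM; linarith [abs_nonneg c]
  have hM0 : 0 < M := lt_of_lt_of_le one_pos hM1
  have hr1 : 1 ≤ r := rr_one_le p δ c
  have hr0 : 0 < r := rr_pos p δ c
  intro n
  induction n using Nat.strong_induction_on with
  | _ n ih =>
    match n with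
    | 0 =>
      rw [a_zero]
      simp only [pow_zero, mul_one, bb_def]
      norm_num
      rw [hM]; unfold MM; linarith [abs_nonneg c]
    | 1 =>
      rw [a_one, abs_zero]
      have := bb_pos 1
      positivity
    | (k+2) =>
      set K : ℝ := (k:ℝ) with hK
      have hK0 : (0:ℝ) ≤ K := Nat.cast_nonneg k
      set D : ℝ := (K+2) * (K+1+α) with hD
      have hD1 : 1 ≤ D := by unfold D; nlinarith
      have hD0 : 0 < D := lt_of_lt_of_le one_pos hD1
      rw [a_rec]
      -- bound the coefficient of the p-th power
      have hcc : |coeffP p (a p α δ c) k| ≤ M^p * r^k * (16^(p-1) * bb k) := by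
        rw [coeffP_eq]
        calc |PowerSeries.coeff k ((PowerSeries.mk (a p α δ c)) ^ p)|
            ≤ PowerSeries.coeff k ((PowerSeries.mk (fun n => M * r^n * bb n)) ^ p) := by
              apply coeff_pow_dominate
              intro m hm
              exact ih m (by omega)
          _ = M^p * r^k * PowerSeries.coeff k ((PowerSeries.mk bb) ^ p) := coeff_scaled M r p k
          _ ≤ M^p * r^k * (16^(p-1) * bb k) := by
              have hcoeff : PowerSeries.coeff k ((PowerSeries.mk bb) ^ p) ≤ 16^(p-1) * bb k := by
                have hp' : p = (p-1) + 1 := by omega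
                rw [hp']
                exact coeff_bb_pow_le (p-1) k
              apply mul_le_mul_of_nonneg_left hcoeff (by positivity)
      -- numeric inequality
      have h9 : bb k ≤ 9 * (bb (k+2) * D) := by
        rw [bb_def, bb_def]
        have hcast : ((k+2 : ℕ):ℝ) + 1 = K + 3 := by push_cast; ring
        rw [hcast]
        have hpos1 : (0:ℝ) < (K+1)^2 := by positivity
        have hpos3 : (0:ℝ) < (K+3)^2 := by positivity
        rw [← sub_nonneg]
        have expand : 9 * (((K+3)^2)⁻¹ * D) - ((K+1)^2)⁻¹
            = (9*D*(K+1)^2 - (K+3)^2) / ((K+3)^2 * (K+1)^2) := by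
          field_simp
        rw [expand]
        apply div_nonneg _ (by positivity)
        nlinarith [sq_nonneg (K+1)]
      have hQ : (0:ℝ) ≤ |δ| * 16^(p-1) * M^(p-1) := by positivity
      have key : |δ| * 16^(p-1) * M^(p-1) * bb k ≤ r^2 * (bb (k+2) * D) := by
        calc |δ| * 16^(p-1) * M^(p-1) * bb k
            ≤ |δ| * 16^(p-1) * M^(p-1) * (9 * (bb (k+2) * D)) := by
              apply mul_le_mul_of_nonneg_left h9 hQ
          _ = (9 * |δ| * 16^(p-1) * M^(p-1)) * (bb (k+2) * D) := by ring
          _ ≤ r^2 * (bb (k+2) * D) := by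
              exact mul_le_mul_of_nonneg_right (rr_sq p δ c)
                (mul_nonneg (le_of_lt (bb_pos _)) (le_of_lt hD0))
      -- final assembly
      rw [abs_div, abs_mul, abs_neg]
      have hDabs : |(K+2) * (K+1+α)| = D := by
        rw [abs_of_pos hD0]
      rw [hDabs, div_le_iff₀ hD0]
      have hMp : M^p = M^(p-1) * M := by
        rw [← pow_succ]
        congr 1
        omega
      calc |δ| * |coeffP p (a p α δ c) k|
          ≤ |δ| * (M^p * r^k * (16^(p-1) * bb k)) := by
            apply mul_le_mul_of_nonneg_left hcc (abs_nonneg δ)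
        _ = (M * r^k) * (|δ| * 16^(p-1) * M^(p-1) * bb k) := by rw [hMp]; ring
        _ ≤ (M * r^k) * (r^2 * (bb (k+2) * D)) := by
            apply mul_le_mul_of_nonneg_left key (by positivity)
        _ = M * r^(k+2) * bb (k+2) * D := by ring

section Analytic

variable {v : ℕ → ℝ} {C R : ℝ}

lemma summable_abs_term (hR : 0 < R) (hv : ∀ n, |v n| ≤ C * R^n) {x : ℝ}
    (hx : |x| < (2*R)⁻¹) : Summable (fun n => |v n * x^n|) := by
  have hC : 0 ≤ C := by
    have := hv 0
    simpa using (abs_nonneg (v 0)).trans this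
  have hRx : R * |x| < 1/2 := by
    rw [inv_eq_one_div] at hx
    rw [lt_div_iff₀ (by positivity)] at hx
    nlinarith [abs_nonneg x]
  apply Summable.of_nonneg_of_le (fun n => abs_nonneg _) (fun n => ?_)
    (((summable_geometric_of_lt_one (r := R * |x|) (by positivity) (by linarith)).mul_left C))
  rw [abs_mul, abs_pow]
  calc |v n| * |x|^n ≤ (C * R^n) * |x|^n := by
        apply mul_le_mul_of_nonneg_right (hv n) (by positivity)
    _ = C * (R * |x|)^n := by rw [mul_pow]; ring

lemma radius_ge (hR : 0 < R) (hv : ∀ n, |v n| ≤ C * R^n) :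
    ENNReal.ofReal ((2*R)⁻¹) ≤ (ofScalars ℝ v).radius := by
  have hC : 0 ≤ C := by
    have := hv 0
    simpa using (abs_nonneg (v 0)).trans this
  rw [ENNReal.ofReal]
  apply FormalMultilinearSeries.le_radius_of_bound _ C
  intro n
  rw [ofScalars_norm]
  have h1 : ((((2*R)⁻¹ : ℝ).toNNReal : ℝ)) = (2*R)⁻¹ := by
    rw [Real.coe_toNNReal]
    positivity
  rw [h1, Real.norm_eq_abs]
  calc |v n| * ((2*R)⁻¹)^n ≤ (C * R^n) * ((2*R)⁻¹)^n := by
        apply mul_le_mul_of_nonneg_right (hv n) (by positivity)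
    _ = C * (R * (2*R)⁻¹)^n := by rw [mul_pow]; ring
    _ = C * (1/2)^n := by
        congr 2
        field_simp
    _ ≤ C * 1 := by
        apply mul_le_mul_of_nonneg_left _ hC
        apply pow_le_one₀ <;> norm_num
    _ = C := mul_one C

lemma hasFPSB (hR : 0 < R) (hv : ∀ n, |v n| ≤ C * R^n) :
    HasFPowerSeriesOnBall (ofScalars ℝ v).sum (ofScalars ℝ v) 0 (ENNReal.ofReal ((2*R)⁻¹)) := by
  have hpos : (0:ℝ≥0∞) < ENNReal.ofReal ((2*R)⁻¹) := by
    rw [ENNReal.ofReal_pos]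
    positivity
  exact ((ofScalars ℝ v).hasFPowerSeriesOnBall
    (lt_of_lt_of_le hpos (radius_ge hR hv))).mono hpos (radius_ge hR hv)

lemma mem_ball_of_abs {x : ℝ} (hR : 0 < R) (hx : |x| < (2*R)⁻¹) :
    x ∈ EMetric.ball (0:ℝ) (ENNReal.ofReal ((2*R)⁻¹)) := by
  rw [EMetric.ball, EMetric.mem_ball, edist_dist, Real.dist_eq, sub_zero]
  exact ENNReal.ofReal_lt_ofReal_iff (by positivity) |>.mpr hx

lemma hasSum_ofScalars (hR : 0 < R) (hv : ∀ n, |v n| ≤ C * R^n) {x : ℝ}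
    (hx : |x| < (2*R)⁻¹) :
    HasSum (fun n => v n * x^n) ((ofScalars ℝ v).sum x) := by
  have := (hasFPSB hR hv).hasSum (mem_ball_of_abs hR hx)
  rw [zero_add] at this
  convert this using 2 with n
  · rfl
  rw [ofScalars_apply_eq, smul_eq_mul]

lemma sum_ofScalars_zero (hR : 0 < R) (hv : ∀ n, |v n| ≤ C * R^n) :
    (ofScalars ℝ v).sum 0 = v 0 := by
  have h1 : HasSum (fun n => v n * (0:ℝ)^n) ((ofScalars ℝ v).sum 0) :=
    hasSum_ofScalars hR hv (by simp; positivity)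
  have h2 : HasSum (fun n => v n * (0:ℝ)^n) (v 0) := by
    convert hasSum_single (f := fun n => v n * (0:ℝ)^n) 0 (fun b hb => by simp [zero_pow hb]) using 1
    simp
  exact h1.unique h2

lemma iteratedDeriv_of_hasFPSB {f : ℝ → ℝ} {e : ℝ≥0∞}
    (h : HasFPowerSeriesOnBall f (ofScalars ℝ v) 0 e) (n : ℕ) :
    iteratedDeriv n f 0 = n.factorial * v n := by
  have := h.factorial_smul (1:ℝ) n
  rw [ofScalars_apply_eq, one_pow, smul_eq_mul, mul_one, nsmul_eq_mul] at this
  rw [iteratedDeriv_eq_iteratedFDeriv, ← this]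


lemma deriv_ofScalars {v1 : ℕ → ℝ} {C1 R1 : ℝ}
    (hR : 0 < R) (hv : ∀ n, |v n| ≤ C * R^n)
    (hR1 : 0 < R1) (hv1def : ∀ n, v1 n = ((n:ℝ)+1) * v (n+1))
    (hv1 : ∀ n, |v1 n| ≤ C1 * R1^n)
    {x : ℝ} (hx : |x| < (2*R)⁻¹) (hx1 : |x| < (2*R1)⁻¹) :
    deriv (ofScalars ℝ v).sum x = (ofScalars ℝ v1).sum x := by
  rcases eq_or_ne x 0 with rfl | hx0
  · have hd : deriv (ofScalars ℝ v).sum 0 = iteratedDeriv 1 (ofScalars ℝ v).sum 0 := by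
      rw [iteratedDeriv_one]
    rw [hd, iteratedDeriv_of_hasFPSB (hasFPSB hR hv) 1, sum_ofScalars_zero hR1 hv1, hv1def 0]
    norm_num
  · have h := hasFPSB hR hv
    have hmem := mem_ball_of_abs hR hx
    have hder := h.fderiv.hasSum hmem
    rw [zero_add] at hder
    have happ := (ContinuousLinearMap.apply ℝ ℝ x).hasSum hder
    have heq : ∀ n, (ContinuousLinearMap.apply ℝ ℝ x)
        ((ofScalars ℝ v).derivSeries n fun _ => x) = v1 n * x^n * x := by
      intro n
      show ((ofScalars ℝ v).derivSeries n fun _ => x) x = v1 n * x^n * x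
      rw [FormalMultilinearSeries.derivSeries_apply_diag, ofScalars_apply_eq, hv1def n]
      rw [nsmul_eq_mul, smul_eq_mul]
      push_cast
      ring
    have hfd : (ContinuousLinearMap.apply ℝ ℝ x) (fderiv ℝ (ofScalars ℝ v).sum x)
        = deriv (ofScalars ℝ v).sum x * x := by
      show (fderiv ℝ (ofScalars ℝ v).sum x) x = deriv (ofScalars ℝ v).sum x * x
      have h1 : (fderiv ℝ (ofScalars ℝ v).sum x) x
          = x * (fderiv ℝ (ofScalars ℝ v).sum x) 1 := by
        rw [← smul_eq_mul, ← (fderiv ℝ (ofScalars ℝ v).sum x).map_smul, smul_eq_mul, mul_one]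
      rw [h1, fderiv_apply_one_eq_deriv]
      ring
    rw [funext heq, hfd] at happ
    have h2 := (hasSum_ofScalars hR1 hv1 hx1).mul_right x
    exact mul_right_cancel₀ hx0 (happ.unique h2)

lemma hasSum_pow_coeff (f : ℕ → ℝ) (x : ℝ) (hf : Summable fun n => |f n * x^n|)
    (S : ℝ) (hS : HasSum (fun n => f n * x^n) S) (q : ℕ) :
    (Summable fun n => |PowerSeries.coeff n ((PowerSeries.mk f)^q) * x^n|) ∧
      HasSum (fun n => PowerSeries.coeff n ((PowerSeries.mk f)^q) * x^n) (S^q) := by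
  induction q with
  | zero =>
    constructor
    · apply summable_of_ne_finset_zero (s := {0})
      intro n hn
      simp only [Finset.mem_singleton] at hn
      simp [PowerSeries.coeff_one, hn]
    · rw [pow_zero]
      convert hasSum_single (f := fun n => PowerSeries.coeff n (1 : PowerSeries ℝ) * x^n) 0
        (fun b hb => by simp [PowerSeries.coeff_one, hb]) using 1
      simp [PowerSeries.coeff_one]
  | succ q ih =>
    obtain ⟨ihs, ihh⟩ := ih
    have hcoeff : ∀ n, PowerSeries.coeff n ((PowerSeries.mk f)^(q+1)) * x^n
        = ∑ kl ∈ Finset.HasAntidiagonal.antidiagonal n,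
            (f kl.1 * x^kl.1) * (PowerSeries.coeff kl.2 ((PowerSeries.mk f)^q) * x^kl.2) := by
      intro n
      rw [pow_succ', PowerSeries.coeff_mul, Finset.sum_mul]
      refine Finset.sum_congr rfl ?_
      rintro ⟨i, j⟩ hij
      rw [Finset.HasAntidiagonal.mem_antidiagonal] at hij
      simp only [PowerSeries.coeff_mk]
      rw [← hij, pow_add]
      ring
    have hf' : Summable fun n => ‖f n * x^n‖ := by simpa only [Real.norm_eq_abs] using hf
    have hg' : Summable fun n => ‖PowerSeries.coeff n ((PowerSeries.mk f)^q) * x^n‖ := by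
      simpa only [Real.norm_eq_abs] using ihs
    have hsum_norm := summable_norm_sum_mul_antidiagonal_of_summable_norm hf' hg'
    have hsummable : Summable fun n => |PowerSeries.coeff n ((PowerSeries.mk f)^(q+1)) * x^n| := by
      simp only [hcoeff]
      simpa [Real.norm_eq_abs] using hsum_norm
    refine ⟨hsummable, ?_⟩
    have htsum := tsum_mul_tsum_eq_tsum_sum_antidiagonal_of_summable_norm hf' hg'
    rw [hS.tsum_eq, ihh.tsum_eq] at htsum
    have : HasSum (fun n => ∑ kl ∈ Finset.HasAntidiagonal.antidiagonal n,
        (f kl.1 * x^kl.1) * (PowerSeries.coeff kl.2 ((PowerSeries.mk f)^q) * x^kl.2))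
        (S * S^q) := by
      rw [Summable.hasSum_iff]
      · exact htsum.symm
      · apply Summable.of_norm
        exact hsum_norm
    rw [← funext hcoeff, ← pow_succ'] at this
    exact this

end Analytic

end LaneEmdenAux
/-- Local analytic solution of the generalized Lane–Emden equation
`u'' + (α/x)u' + δu^p = 0` at `x = 0` with `u(0) = c`, `u'(0) = 0`, whose Taylor
coefficients `a_k = u^{(k)}(0)/k!` satisfy `(k+2)(k+1+α) a_{k+2} = -δ c_k`, where `c_k`
are the Taylor coefficients of `u^p` at `0`. -/
theorem generalizedLaneEmden_local_analytic_solution_at_zero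
    (p : ℕ) (hp : 1 < p) (α δ : ℝ) (hα : 0 < α) :
    ∀ c : ℝ, ∃ ε > (0 : ℝ), ∃ u : ℝ → ℝ,
      AnalyticOnNhd ℝ u (Ioo (-ε) ε) ∧ u 0 = c ∧ deriv u 0 = 0 ∧
      (∀ x ∈ Ioo (0 : ℝ) ε,
        deriv (deriv u) x + (α / x) * deriv u x + δ * u x ^ p = 0) ∧
      iteratedDeriv 0 u 0 / (Nat.factorial 0 : ℝ) = c ∧
      iteratedDeriv 1 u 0 / (Nat.factorial 1 : ℝ) = 0 ∧
      ∀ k : ℕ,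
        ((k : ℝ) + 2) * ((k : ℝ) + 1 + α)
            * (iteratedDeriv (k + 2) u 0 / (Nat.factorial (k + 2) : ℝ))
          = -δ * (iteratedDeriv k (fun x => u x ^ p) 0 / (Nat.factorial k : ℝ)) := by
  intro c
  classical
  set A : ℕ → ℝ := LaneEmdenAux.a p α δ c with hAdef
  set M : ℝ := LaneEmdenAux.MM c with hMdef
  set r : ℝ := LaneEmdenAux.rr p δ c with hrdef
  have hM1 : 1 ≤ M := by rw [hMdef]; unfold LaneEmdenAux.MM; linarith [abs_nonneg c]
  have hM0 : 0 < M := by linarith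
  have hr1 : 1 ≤ r := LaneEmdenAux.rr_one_le p δ c
  have hr0 : 0 < r := by linarith
  have hA0 : A 0 = c := LaneEmdenAux.a_zero p α δ c
  have hA1zero : A 1 = 0 := LaneEmdenAux.a_one p α δ c
  have habs : ∀ n, |A n| ≤ M * r^n * LaneEmdenAux.bb n := LaneEmdenAux.a_bound p α δ c hp hα
  have habs' : ∀ n, |A n| ≤ M * r^n := by
    intro n
    calc |A n| ≤ M * r^n * LaneEmdenAux.bb n := habs n
      _ ≤ M * r^n * 1 :=
          mul_le_mul_of_nonneg_left (LaneEmdenAux.bb_le_one n) (by positivity)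
      _ = M * r^n := mul_one _
  set R : ℝ := 4*r with hRdef
  have hR0 : 0 < R := by positivity
  have hrR : r ≤ R := by rw [hRdef]; linarith
  have hrRn : ∀ n : ℕ, r^n ≤ R^n := fun n => pow_le_pow_left₀ (le_of_lt hr0) hrR n
  have h2pow : ∀ n : ℕ, ((n:ℝ)+1) ≤ 2 * 2^n := by
    intro n
    have h := (Nat.lt_two_pow_self (n := n+1)).le
    have h2 : ((n+1:ℕ):ℝ) ≤ ((2^(n+1):ℕ):ℝ) := Nat.cast_le.mpr h
    push_cast at h2
    rw [pow_succ] at h2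
    linarith
  have hA : ∀ n, |A n| ≤ M * R^n := by
    intro n
    calc |A n| ≤ M * r^n := habs' n
      _ ≤ M * R^n := mul_le_mul_of_nonneg_left (hrRn n) (by positivity)
  set A1 : ℕ → ℝ := fun n => ((n:ℝ)+1) * A (n+1) with hA1def
  set A2 : ℕ → ℝ := fun n => ((n:ℝ)+1) * A1 (n+1) with hA2def
  set CC : ℕ → ℝ := fun n => PowerSeries.coeff n ((PowerSeries.mk A)^p) with hCCdef
  have hA2e : ∀ n, A2 n = (((n:ℝ)+1) * ((n:ℝ)+2)) * A (n+2) := by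
    intro n
    simp only [hA2def, hA1def]
    push_cast
    ring
  have hA1e : ∀ n, A1 (n+1) = ((n:ℝ)+2) * A (n+2) := by
    intro n
    simp only [hA1def]
    push_cast
    ring
  have hbA1 : ∀ n, |A1 n| ≤ (4*M*r) * R^n := by
    intro n
    have h1 : |A1 n| = ((n:ℝ)+1) * |A (n+1)| := by
      rw [hA1def]
      simp only
      rw [abs_mul, abs_of_nonneg (by positivity : (0:ℝ) ≤ (n:ℝ)+1)]
    rw [h1]
    calc ((n:ℝ)+1) * |A (n+1)| ≤ ((n:ℝ)+1) * (M * r^(n+1)) :=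
          mul_le_mul_of_nonneg_left (habs' (n+1)) (by positivity)
      _ ≤ (2*2^n) * (M * r^(n+1)) :=
          mul_le_mul_of_nonneg_right (h2pow n) (by positivity)
      _ = (2*M*r) * (2*r)^n := by rw [pow_succ, mul_pow]; ring
      _ ≤ (2*M*r) * R^n := by
          apply mul_le_mul_of_nonneg_left _ (by positivity)
          apply pow_le_pow_left₀ (by positivity)
          rw [hRdef]; linarith
      _ ≤ (4*M*r) * R^n := by
          have hMrR : (0:ℝ) ≤ M * r * R^n := by positivity
          linarith
  have hbA2 : ∀ n, |A2 n| ≤ (16*M*r^2) * R^n := by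
    intro n
    have hn2 : ((n:ℝ)+2) ≤ 4 * 2^n := by
      have := h2pow (n+1)
      push_cast at this
      rw [pow_succ] at this
      linarith
    have h1 : |A2 n| = (((n:ℝ)+1) * ((n:ℝ)+2)) * |A (n+2)| := by
      rw [hA2e n, abs_mul, abs_of_nonneg (by positivity : (0:ℝ) ≤ ((n:ℝ)+1) * ((n:ℝ)+2))]
    rw [h1]
    calc (((n:ℝ)+1) * ((n:ℝ)+2)) * |A (n+2)|
        ≤ (((n:ℝ)+1) * ((n:ℝ)+2)) * (M * r^(n+2)) :=
          mul_le_mul_of_nonneg_left (habs' (n+2)) (by positivity)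
      _ ≤ ((2*2^n) * (4*2^n)) * (M * r^(n+2)) := by
          apply mul_le_mul_of_nonneg_right _ (by positivity)
          apply mul_le_mul (h2pow n) hn2 (by positivity) (by positivity)
      _ = (8*M*r^2) * ((2:ℝ)^n * 2^n * r^n) := by rw [pow_succ, pow_succ]; ring
      _ = (8*M*r^2) * R^n := by
          rw [hRdef, show ((2:ℝ)^n * 2^n : ℝ) = 4^n by rw [← mul_pow]; norm_num,
            show ((4:ℝ)*r)^n = 4^n * r^n from mul_pow 4 r n]
      _ ≤ (16*M*r^2) * R^n := by
          have hMr2R : (0:ℝ) ≤ M * r^2 * R^n := by positivity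
          linarith
  have hbCC : ∀ n, |CC n| ≤ (16^(p-1) * M^p) * R^n := by
    intro n
    have hd : |CC n| ≤ PowerSeries.coeff n
        ((PowerSeries.mk (fun m => M * r^m * LaneEmdenAux.bb m))^p) :=
      LaneEmdenAux.coeff_pow_dominate A _ p n (fun m _ => habs m)
    rw [LaneEmdenAux.coeff_scaled] at hd
    have hpb : PowerSeries.coeff n ((PowerSeries.mk LaneEmdenAux.bb)^p)
        ≤ 16^(p-1) * LaneEmdenAux.bb n := by
      have hp' : p = (p-1) + 1 := by omega
      rw [hp']
      exact LaneEmdenAux.coeff_bb_pow_le (p-1) n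
    calc |CC n| ≤ M^p * r^n * (16^(p-1) * LaneEmdenAux.bb n) := by
          refine hd.trans (mul_le_mul_of_nonneg_left hpb (by positivity))
      _ ≤ M^p * r^n * (16^(p-1) * 1) := by
          apply mul_le_mul_of_nonneg_left _ (by positivity)
          exact mul_le_mul_of_nonneg_left (LaneEmdenAux.bb_le_one n) (by positivity)
      _ = (16^(p-1) * M^p) * r^n := by ring
      _ ≤ (16^(p-1) * M^p) * R^n :=
          mul_le_mul_of_nonneg_left (hrRn n) (by positivity)
  -- the solution and its cousins
  set u : ℝ → ℝ := (FormalMultilinearSeries.ofScalars ℝ A).sum with hudef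
  set u1 : ℝ → ℝ := (FormalMultilinearSeries.ofScalars ℝ A1).sum with hu1def
  set u2 : ℝ → ℝ := (FormalMultilinearSeries.ofScalars ℝ A2).sum with hu2def
  have hq := LaneEmdenAux.hasFPSB hR0 hA
  have hArec : ∀ k : ℕ, ((k:ℝ)+2) * ((k:ℝ)+1+α) * A (k+2) = -δ * CC k := by
    intro k
    have h1 : (0:ℝ) < (k:ℝ)+2 := by positivity
    have h2 : (0:ℝ) < (k:ℝ)+1+α := by
      have : (0:ℝ) ≤ (k:ℝ) := Nat.cast_nonneg k
      linarith
    have hD : ((k:ℝ)+2) * ((k:ℝ)+1+α) ≠ 0 := by positivity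
    have hCCk : CC k = LaneEmdenAux.coeffP p A k := by
      rw [hCCdef]
      simp only
      rw [LaneEmdenAux.coeffP_eq]
    have hrec' : A (k+2) = -δ * LaneEmdenAux.coeffP p A k / (((k:ℝ)+2) * ((k:ℝ)+1+α)) :=
      LaneEmdenAux.a_rec p α δ c k
    rw [hCCk, hrec']
    field_simp
  -- the power function series
  have hqc : HasFPowerSeriesOnBall (fun y => u y ^ p)
      (FormalMultilinearSeries.ofScalars ℝ CC) 0 (ENNReal.ofReal ((2*R)⁻¹)) := by
    refine ⟨LaneEmdenAux.radius_ge hR0 hbCC, by rw [ENNReal.ofReal_pos]; positivity,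
      fun {y} hy => ?_⟩
    have hya : |y| < (2*R)⁻¹ := by
      rw [EMetric.mem_ball, edist_dist, Real.dist_eq, sub_zero] at hy
      exact (ENNReal.ofReal_lt_ofReal_iff_of_nonneg (abs_nonneg _)).mp hy
    have hsA : HasSum (fun n => A n * y^n) (u y) := LaneEmdenAux.hasSum_ofScalars hR0 hA hya
    have hsabs : Summable (fun n => |A n * y^n|) := LaneEmdenAux.summable_abs_term hR0 hA hya
    have hps := (LaneEmdenAux.hasSum_pow_coeff A y hsabs (u y) hsA p).2
    simp only [zero_add]
    convert hps using 2 with n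
    · rfl
    rw [FormalMultilinearSeries.ofScalars_apply_eq, smul_eq_mul]
  refine ⟨(2*R)⁻¹, by positivity, u, ?_, ?_, ?_, ?_, ?_, ?_, ?_⟩
  · -- analytic
    intro x hx
    have hxa : |x| < (2*R)⁻¹ := abs_lt.mpr ⟨hx.1, hx.2⟩
    exact hq.analyticAt_of_mem (LaneEmdenAux.mem_ball_of_abs hR0 hxa)
  · -- u 0 = c
    rw [hudef, LaneEmdenAux.sum_ofScalars_zero hR0 hA, hA0]
  · -- deriv u 0 = 0
    rw [← iteratedDeriv_one, LaneEmdenAux.iteratedDeriv_of_hasFPSB hq 1, hA1zero, mul_zero]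
  · -- the ODE
    intro x hx
    obtain ⟨hx0, hxε⟩ := hx
    have hxne : x ≠ 0 := ne_of_gt hx0
    have hxa : |x| < (2*R)⁻¹ := by rw [abs_of_pos hx0]; exact hxε
    have hd1 : deriv u x = u1 x :=
      LaneEmdenAux.deriv_ofScalars hR0 hA hR0 (fun n => rfl) hbA1 hxa hxa
    have hd1' : ∀ y ∈ Metric.ball (0:ℝ) ((2*R)⁻¹), deriv u y = u1 y := by
      intro y hy
      have hya : |y| < (2*R)⁻¹ := by
        rw [← Real.norm_eq_abs]
        exact mem_ball_zero_iff.mp hy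
      exact LaneEmdenAux.deriv_ofScalars hR0 hA hR0 (fun n => rfl) hbA1 hya hya
    have hev : deriv u =ᶠ[nhds x] u1 :=
      Filter.eventuallyEq_of_mem
        (Metric.isOpen_ball.mem_nhds (by rw [mem_ball_zero_iff, Real.norm_eq_abs]; exact hxa))
        hd1'
    have hd2 : deriv (deriv u) x = u2 x := by
      rw [hev.deriv_eq]
      exact LaneEmdenAux.deriv_ofScalars hR0 hbA1 hR0 (fun n => rfl) hbA2 hxa hxa
    have hs1 : HasSum (fun n => A1 n * x^n) (u1 x) := LaneEmdenAux.hasSum_ofScalars hR0 hbA1 hxa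
    have hs2 : HasSum (fun n => A2 n * x^n) (u2 x) := LaneEmdenAux.hasSum_ofScalars hR0 hbA2 hxa
    have hsA : HasSum (fun n => A n * x^n) (u x) := LaneEmdenAux.hasSum_ofScalars hR0 hA hxa
    have hsabs : Summable (fun n => |A n * x^n|) := LaneEmdenAux.summable_abs_term hR0 hA hxa
    have hsc : HasSum (fun n => CC n * x^n) (u x ^ p) :=
      (LaneEmdenAux.hasSum_pow_coeff A x hsabs (u x) hsA p).2
    have SA := hs2.mul_left x
    have SB0 := hs1.mul_left α
    have SB := (hasSum_nat_add_iff' (f := fun n => α * (A1 n * x^n)) 1).mpr SB0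
    have hA10 : A1 0 = 0 := by
      rw [hA1def]
      simp [hA1zero]
    have hsub : α * u1 x - ∑ i ∈ Finset.range 1, α * (A1 i * x^i) = α * u1 x := by
      simp [hA10]
    rw [hsub] at SB
    have SC := hsc.mul_left (δ * x)
    have total := (SA.add SB).add SC
    have hterm : (fun n => (x * (A2 n * x^n) + α * (A1 (n+1) * x^(n+1)))
        + (δ*x) * (CC n * x^n)) = fun _ => (0:ℝ) := by
      funext n
      rw [hA2e n, hA1e n]
      linear_combination (x^(n+1)) * hArec n
    rw [hterm] at total
    have hval : x * u2 x + α * u1 x + (δ*x) * (u x ^ p) = 0 := by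
      have h0 : HasSum (fun _ : ℕ => (0:ℝ)) 0 := hasSum_zero
      have := total.unique h0
      linarith [this]
    rw [hd1, hd2]
    have hgoal : u2 x + (α/x) * u1 x + δ * u x ^ p
        = (x * u2 x + α * u1 x + (δ*x) * (u x ^ p)) / x := by
      field_simp
    rw [hgoal, hval, zero_div]
  · -- iteratedDeriv 0
    rw [LaneEmdenAux.iteratedDeriv_of_hasFPSB hq 0, hA0]
    norm_num
  · -- iteratedDeriv 1
    rw [LaneEmdenAux.iteratedDeriv_of_hasFPSB hq 1, hA1zero]
    norm_num
  · -- the recursion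
    intro k
    rw [LaneEmdenAux.iteratedDeriv_of_hasFPSB hq (k+2),
      LaneEmdenAux.iteratedDeriv_of_hasFPSB hqc k]
    have hf1 : (((k+2).factorial : ℝ)) ≠ 0 := Nat.cast_ne_zero.mpr (Nat.factorial_ne_zero _)
    have hf2 : ((k.factorial : ℝ)) ≠ 0 := Nat.cast_ne_zero.mpr (Nat.factorial_ne_zero _)
    rw [mul_div_cancel_left₀ _ hf1, mul_div_cancel_left₀ _ hf2]
    exact hArec k
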